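/- Let a < b, let φ : [a,b] → [a,b] be an affine continuous map with φ(a) < φ(b), let g : [a,b] → [0,∞) be φ-convex and Lebesgue integrable, and let f : [a,b] → [0,∞) be Lebesgue integrable and (g,φ)-convex dominated on [a,b] (i.e. (g,φ_h)-convex dominated with h(t) = t). Then |(1/(φ(b) − φ(a))) ∫_{φ(a)}^{φ(b)} f(x) dx − f((φ(a) + φ(b))/2)| ≤ (1/(φ(b) − φ(a))) ∫_{φ(a)}^{φ(b)} g(x) dx − g((φ(a) + φ(b))/2). -/

import Mathlib

open MeasureTheory Set

/-- `F` is `φ_h`-convex on `I`. -/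
def PhiHConvexOn (I : Set ℝ) (h φ F : ℝ → ℝ) : Prop :=
  ∀ x ∈ I, ∀ y ∈ I, ∀ t ∈ Set.Ioo (0:ℝ) 1,
    F (t * φ x + (1 - t) * φ y) ≤ h t * F (φ x) + h (1 - t) * F (φ y)

/-- `f` is `(g, φ_h)`-convex dominated on `I`. -/
def GPhiHConvexDominated (I : Set ℝ) (h φ g f : ℝ → ℝ) : Prop :=
  ∀ x ∈ I, ∀ y ∈ I, ∀ t ∈ Set.Ioo (0:ℝ) 1,
    |h t * f (φ x) + h (1 - t) * f (φ y) - f (t * φ x + (1 - t) * φ y)| ≤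
      h t * g (φ x) + h (1 - t) * g (φ y) - g (t * φ x + (1 - t) * φ y)

theorem stmt4 (a b : ℝ) (hab : a < b) (φ f g : ℝ → ℝ)
    (hφmaps : Set.MapsTo φ (Set.Icc a b) (Set.Icc a b))
    (hφaff : ∀ x ∈ Set.Icc a b, ∀ y ∈ Set.Icc a b, ∀ l ∈ Set.Icc (0:ℝ) 1,
      φ (l * x + (1 - l) * y) = l * φ x + (1 - l) * φ y)
    (hφcont : ContinuousOn φ (Set.Icc a b))
    (hφab : φ a < φ b)
    (hg0 : ∀ x ∈ Set.Icc a b, 0 ≤ g x)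
    (hgconv : PhiHConvexOn (Set.Icc a b) (fun t => t) φ g)
    (hgint : IntegrableOn g (Set.Icc a b))
    (hf0 : ∀ x ∈ Set.Icc a b, 0 ≤ f x)
    (hfint : IntegrableOn f (Set.Icc a b))
    (hfdom : GPhiHConvexDominated (Set.Icc a b) (fun t => t) φ g f) :
    |(1 / (φ b - φ a)) * ∫ x in φ a..φ b, f x - f ((φ a + φ b) / 2)| ≤
      (1 / (φ b - φ a)) * ∫ x in φ a..φ b, g x - g ((φ a + φ b) / 2) := by
  have ha' : a ∈ Set.Icc a b := ⟨le_refl a, hab.le⟩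
  have hb' : b ∈ Set.Icc a b := ⟨hab.le, le_refl b⟩
  have hφa := hφmaps ha'
  have hφb := hφmaps hb'
  set S : ℝ := φ a + φ b with hS
  set L : ℝ := φ b - φ a with hLdef
  have hL : 0 < L := sub_pos.mpr hφab
  have hLne : L ≠ 0 := hL.ne'
  have hsub : Set.Icc (φ a) (φ b) ⊆ Set.Icc a b := Set.Icc_subset_Icc hφa.1 hφb.2
  -- pointwise key inequality
  have key : ∀ u ∈ Set.Icc (φ a) (φ b),
      |(1/2) * f u + (1/2) * f (S - u) - f (S / 2)| ≤
      (1/2) * g u + (1/2) * g (S - u) - g (S / 2) := by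
    intro u hu
    set t : ℝ := (φ b - u) / L with htdef
    have ht0 : 0 ≤ t := div_nonneg (by linarith [hu.2]) hL.le
    have ht1 : t ≤ 1 := by
      rw [div_le_one hL]; linarith [hu.1]
    set x : ℝ := t * a + (1 - t) * b with hxdef
    set y : ℝ := t * b + (1 - t) * a with hydef
    have hx : x ∈ Set.Icc a b := by
      constructor <;> [nlinarith; nlinarith]
    have hy : y ∈ Set.Icc a b := by
      constructor <;> [nlinarith; nlinarith]
    have hφx : φ x = u := by
      rw [hxdef, hφaff a ha' b hb' t ⟨ht0, ht1⟩]
      field_simp [htdef]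
      have ht : t * L = φ b - u := by rw [htdef]; field_simp
      linear_combination -ht + t * hLdef
    have hφy : φ y = S - u := by
      rw [hydef, hφaff b hb' a ha' t ⟨ht0, ht1⟩]
      field_simp [htdef, hS]
      have ht : t * L = φ b - u := by rw [htdef]; field_simp
      linear_combination ht - t * hLdef - hS
    have := hfdom x hx y hy (1/2) ⟨by norm_num, by norm_num⟩
    rw [hφx, hφy] at this
    have hmid : (1:ℝ)/2 * u + (1 - 1/2) * (S - u) = S / 2 := by ring
    rw [hmid] at this
    simp only [] at this
    norm_num at this ⊢
    convert this using 2 <;> ring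
  -- integrability
  have hfI : IntervalIntegrable f volume (φ a) (φ b) := by
    rw [intervalIntegrable_iff_integrableOn_Icc_of_le hφab.le]
    exact hfint.mono_set hsub
  have hgI : IntervalIntegrable g volume (φ a) (φ b) := by
    rw [intervalIntegrable_iff_integrableOn_Icc_of_le hφab.le]
    exact hgint.mono_set hsub
  have hfI' : IntervalIntegrable (fun x => f (S - x)) volume (φ a) (φ b) := by
    have := (hfI.comp_sub_left S).symm
    have h1 : S - φ a = φ b := by rw [hS]; ring
    have h2 : S - φ b = φ a := by rw [hS]; ring
    rwa [h1, h2] at this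
  have hgI' : IntervalIntegrable (fun x => g (S - x)) volume (φ a) (φ b) := by
    have := (hgI.comp_sub_left S).symm
    have h1 : S - φ a = φ b := by rw [hS]; ring
    have h2 : S - φ b = φ a := by rw [hS]; ring
    rwa [h1, h2] at this
  have hFint : IntervalIntegrable (fun u => (1/2) * f u + (1/2) * f (S - u) - f (S / 2))
      volume (φ a) (φ b) :=
    ((hfI.const_mul _).add (hfI'.const_mul _)).sub intervalIntegrable_const
  have hGint : IntervalIntegrable (fun u => (1/2) * g u + (1/2) * g (S - u) - g (S / 2))
      volume (φ a) (φ b) :=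
    ((hgI.const_mul _).add (hgI'.const_mul _)).sub intervalIntegrable_const
  -- integral inequality
  have habs : |∫ u in φ a..φ b, ((1/2) * f u + (1/2) * f (S - u) - f (S / 2))| ≤
      ∫ u in φ a..φ b, ((1/2) * g u + (1/2) * g (S - u) - g (S / 2)) :=
    (intervalIntegral.abs_integral_le_integral_abs hφab.le).trans
      (intervalIntegral.integral_mono_on hφab.le hFint.abs hGint key)
  -- reflected integrals
  have hreflf : ∫ u in φ a..φ b, f (S - u) = ∫ u in φ a..φ b, f u := by
    rw [intervalIntegral.integral_comp_sub_left f S]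
    have h1 : S - φ a = φ b := by rw [hS]; ring
    have h2 : S - φ b = φ a := by rw [hS]; ring
    rw [h1, h2]
  have hreflg : ∫ u in φ a..φ b, g (S - u) = ∫ u in φ a..φ b, g u := by
    rw [intervalIntegral.integral_comp_sub_left g S]
    have h1 : S - φ a = φ b := by rw [hS]; ring
    have h2 : S - φ b = φ a := by rw [hS]; ring
    rw [h1, h2]
  -- compute integrals
  have hFval : ∫ u in φ a..φ b, ((1/2) * f u + (1/2) * f (S - u) - f (S / 2)) =
      (∫ u in φ a..φ b, f u) - L * f (S / 2) := by
    rw [intervalIntegral.integral_sub ((hfI.const_mul _).add (hfI'.const_mul _))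
        intervalIntegrable_const,
      intervalIntegral.integral_add (hfI.const_mul _) (hfI'.const_mul _),
      intervalIntegral.integral_const_mul, intervalIntegral.integral_const_mul,
      intervalIntegral.integral_const, hreflf, smul_eq_mul]
    ring
  have hGval : ∫ u in φ a..φ b, ((1/2) * g u + (1/2) * g (S - u) - g (S / 2)) =
      (∫ u in φ a..φ b, g u) - L * g (S / 2) := by
    rw [intervalIntegral.integral_sub ((hgI.const_mul _).add (hgI'.const_mul _))
        intervalIntegrable_const,
      intervalIntegral.integral_add (hgI.const_mul _) (hgI'.const_mul _),
      intervalIntegral.integral_const_mul, intervalIntegral.integral_const_mul,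
      intervalIntegral.integral_const, hreflg, smul_eq_mul]
    ring
  rw [hFval, hGval] at habs
  -- conclude
  have hf2 : ∫ x in φ a..φ b, (f x - f (S / 2)) =
      (∫ u in φ a..φ b, f u) - L * f (S / 2) := by
    rw [intervalIntegral.integral_sub hfI intervalIntegrable_const,
      intervalIntegral.integral_const, smul_eq_mul]
  have hg2 : ∫ x in φ a..φ b, (g x - g (S / 2)) =
      (∫ u in φ a..φ b, g u) - L * g (S / 2) := by
    rw [intervalIntegral.integral_sub hgI intervalIntegrable_const,
      intervalIntegral.integral_const, smul_eq_mul]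
  have hmid : (φ a + φ b) / 2 = S / 2 := by rw [hS]
  rw [hmid, hf2, hg2, abs_mul, abs_of_pos (by positivity : (0:ℝ) < 1 / L)]
  exact mul_le_mul_of_nonneg_left habs (by positivity)
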